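/- Let m ≥ 1. Then the G-fixed points of V_{2m+1} are the k-linear span of b₁,…,bₘ, and the sum over i = 1, 2, 3 of the images of the relative trace maps Tr^G_{Hᵢ} : (V_{2m+1})^{Hᵢ} → (V_{2m+1})^G equals the k-linear span of the three elements b₁, bₘ, and b₁+⋯+bₘ. -/

import Mathlib

/-- The Klein four-group `G = C₂ × C₂`. -/
abbrev K4 : Type := Multiplicative (ZMod 2 × ZMod 2)

/-- The generator `σ` of the Klein four-group. -/
def sg : K4 := Multiplicative.ofAdd ((1 : ZMod 2), (0 : ZMod 2))

/-- The generator `τ` of the Klein four-group. -/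
def tg : K4 := Multiplicative.ofAdd ((0 : ZMod 2), (1 : ZMod 2))

/-- The subgroup `H₁ = ⟨σ⟩`. -/
def H1 : Subgroup K4 := Subgroup.zpowers sg

/-- The subgroup `H₂ = ⟨τ⟩`. -/
def H2 : Subgroup K4 := Subgroup.zpowers tg

/-- The subgroup `H₃ = ⟨στ⟩`. -/
def H3 : Subgroup K4 := Subgroup.zpowers (sg * tg)

/-- The relative trace map `Tr^G_H : M^H → M^G`, `Tr^G_H(x) = Σ_{g ∈ S} g • x`, where the
sum runs over the set `S` of representatives (`Quotient.out`) of the left cosets of `H`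
in `G` (a left transversal). -/
noncomputable def relTr (H : Subgroup K4) {V : Type} [AddCommMonoid V] [SMul K4 V]
    (v : V) : V :=
  ∑ᶠ c : K4 ⧸ H, Quotient.out c • v

/-- `V` carries the structure of the module `V_{2n+1}`: the basis vector `B (Sum.inl j)`
is `a_j` (for `0 ≤ j ≤ n`) and `B (Sum.inr i)` is `b_{i+1}` (for `0 ≤ i ≤ n-1`), with
`X·aᵢ = bᵢ` (`1 ≤ i ≤ n`), `Y·aᵢ = b_{i+1}` (`0 ≤ i ≤ n-1`), `X·a₀ = Y·aₙ = 0` and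
`X·bⱼ = Y·bⱼ = 0`, i.e. (with `σ = 1 + X`, `τ = 1 + Y`) `σ·aᵢ = aᵢ + bᵢ` for `i ≥ 1`,
`σ·a₀ = a₀`, `τ·aᵢ = aᵢ + b_{i+1}` for `i ≤ n-1`, `τ·aₙ = aₙ`, and `σ, τ` fix the `bⱼ`. -/
def IsVpos (k : Type) [Field k] (n : ℕ) (V : Type) [AddCommGroup V] [Module k V]
    [DistribMulAction K4 V] (B : Module.Basis (Fin (n + 1) ⊕ Fin n) k V) : Prop :=
  (sg • B (Sum.inl 0) = B (Sum.inl 0)) ∧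
  (∀ i : Fin n, sg • B (Sum.inl i.succ) = B (Sum.inl i.succ) + B (Sum.inr i)) ∧
  (∀ i : Fin n, tg • B (Sum.inl i.castSucc) = B (Sum.inl i.castSucc) + B (Sum.inr i)) ∧
  (tg • B (Sum.inl (Fin.last n)) = B (Sum.inl (Fin.last n))) ∧
  (∀ j : Fin n, sg • B (Sum.inr j) = B (Sum.inr j)) ∧
  (∀ j : Fin n, tg • B (Sum.inr j) = B (Sum.inr j))

section K4Helpers

lemma K4_cases : ∀ x : K4, x = 1 ∨ x = sg ∨ x = tg ∨ x = sg * tg := by decide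

lemma K4_sq : ∀ x : K4, x * x = 1 := by decide

lemma mem_zpowers_iff' (x y : K4) : y ∈ Subgroup.zpowers x ↔ y = 1 ∨ y = x := by
  constructor
  · rintro ⟨n, rfl⟩
    rcases Int.even_or_odd n with ⟨q, rfl⟩ | ⟨q, rfl⟩
    · left
      show x ^ (q + q) = 1
      rw [zpow_add, ← mul_zpow, K4_sq x, one_zpow]
    · right
      show x ^ (2 * q + 1) = x
      rw [zpow_add, zpow_one, two_mul, zpow_add, ← mul_zpow, K4_sq x, one_zpow, one_mul]
  · rintro (rfl | rfl)
    exacts [one_mem _, Subgroup.mem_zpowers _]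

lemma relTr_eq (H : Subgroup K4) (g : K4) (hg : g ∉ H)
    (hcov : ∀ x : K4, x ∈ H ∨ g⁻¹ * x ∈ H)
    {V : Type} [AddCommMonoid V] [MulAction K4 V]
    (v : V) (hv : ∀ h ∈ H, h • v = v) :
    relTr H v = v + g • v := by
  classical
  letI : Fintype (K4 ⧸ H) := Fintype.ofFinite _
  have hne : (QuotientGroup.mk (s := H) g) ≠ QuotientGroup.mk 1 := by
    intro h1
    rw [QuotientGroup.eq] at h1
    rw [mul_one] at h1
    exact hg (by simpa using inv_mem h1)
  let e : Bool → K4 ⧸ H := fun b => if b then QuotientGroup.mk g else QuotientGroup.mk 1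
  have het : e true = QuotientGroup.mk g := rfl
  have hef : e false = QuotientGroup.mk 1 := rfl
  have hbij : Function.Bijective e := by
    constructor
    · intro a b hab
      match a, b with
      | true, true => rfl
      | false, false => rfl
      | true, false => rw [het, hef] at hab; exact absurd hab hne
      | false, true => rw [het, hef] at hab; exact absurd hab.symm hne
    · intro c
      induction c using QuotientGroup.induction_on with
      | H x =>
        rcases hcov x with hx | hx
        · exact ⟨false, by rw [hef]; rw [QuotientGroup.eq]; simpa using inv_mem hx⟩
        · exact ⟨true, by rw [het]; rw [QuotientGroup.eq]; exact hx⟩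
  have hout : ∀ x : K4, (Quotient.out (QuotientGroup.mk (s := H) x)) • v = x • v := by
    intro x
    have h1 : QuotientGroup.mk (s := H) (Quotient.out (QuotientGroup.mk (s := H) x)) =
        QuotientGroup.mk x := Quotient.out_eq _
    rw [QuotientGroup.eq] at h1
    have h2 : Quotient.out (QuotientGroup.mk (s := H) x) =
        x * ((Quotient.out (QuotientGroup.mk (s := H) x))⁻¹ * x)⁻¹ := by group
    rw [h2, mul_smul, hv _ (inv_mem h1)]
  unfold relTr
  rw [finsum_eq_sum_of_fintype]
  rw [← Fintype.sum_bijective e hbij _ _ (fun _ => rfl)]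
  rw [Fintype.sum_bool, het, hef, hout, hout, one_smul, add_comm]

end K4Helpers

section VHelpers

set_option linter.unusedSectionVars false

variable (k : Type) [Field k] [CharP k 2] (m : ℕ)
    (V : Type) [AddCommGroup V] [Module k V] [DistribMulAction K4 V] [SMulCommClass K4 k V]
    (B : Module.Basis (Fin (m + 1) ⊕ Fin m) k V) (hV : IsVpos k m V B)

lemma smul_expand (g : K4) (v : V) : g • v = ∑ x, B.repr v x • (g • B x) := by
  conv_lhs => rw [← B.sum_repr v]
  rw [Finset.smul_sum]
  exact Finset.sum_congr rfl fun x _ => (smul_comm g _ _)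

include hV in
lemma hXv (v : V) :
    sg • v = v + ∑ i : Fin m, B.repr v (Sum.inl i.succ) • B (Sum.inr i) := by
  rw [smul_expand k m V B sg v]
  conv_rhs => enter [1]; rw [← B.sum_repr v]
  rw [Fintype.sum_sum_type, Fintype.sum_sum_type, Fin.sum_univ_succ, Fin.sum_univ_succ, hV.1]
  rw [Finset.sum_congr rfl (fun i _ => by rw [hV.2.1 i, smul_add] :
    ∀ i ∈ Finset.univ, B.repr v (Sum.inl i.succ) • (sg • B (Sum.inl i.succ)) =
      B.repr v (Sum.inl i.succ) • B (Sum.inl i.succ) + B.repr v (Sum.inl i.succ) • B (Sum.inr i))]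
  rw [Finset.sum_congr rfl (fun i _ => by rw [hV.2.2.2.2.1 i] :
    ∀ i ∈ Finset.univ, B.repr v (Sum.inr i) • (sg • B (Sum.inr i)) =
      B.repr v (Sum.inr i) • B (Sum.inr i))]
  rw [Finset.sum_add_distrib]
  abel

include hV in
lemma hYv (v : V) :
    tg • v = v + ∑ i : Fin m, B.repr v (Sum.inl i.castSucc) • B (Sum.inr i) := by
  rw [smul_expand k m V B tg v]
  conv_rhs => enter [1]; rw [← B.sum_repr v]
  rw [Fintype.sum_sum_type, Fintype.sum_sum_type, Fin.sum_univ_castSucc, Fin.sum_univ_castSucc,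
    hV.2.2.2.1]
  rw [Finset.sum_congr rfl (fun i _ => by rw [hV.2.2.1 i, smul_add] :
    ∀ i ∈ Finset.univ, B.repr v (Sum.inl i.castSucc) • (tg • B (Sum.inl i.castSucc)) =
      B.repr v (Sum.inl i.castSucc) • B (Sum.inl i.castSucc) +
        B.repr v (Sum.inl i.castSucc) • B (Sum.inr i))]
  rw [Finset.sum_congr rfl (fun i _ => by rw [hV.2.2.2.2.2 i] :
    ∀ i ∈ Finset.univ, B.repr v (Sum.inr i) • (tg • B (Sum.inr i)) =
      B.repr v (Sum.inr i) • B (Sum.inr i))]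
  rw [Finset.sum_add_distrib]
  abel

end VHelpers

/-- Let `m ≥ 1`. The `G`-fixed points of `V_{2m+1}` are the span of `b₁, …, bₘ`, and the
sum over `i = 1, 2, 3` of the images of the relative trace maps
`Tr^G_{Hᵢ} : (V_{2m+1})^{Hᵢ} → (V_{2m+1})^G` equals the span of `b₁`, `bₘ` and
`b₁ + ⋯ + bₘ`. -/
theorem stmt19 (k : Type) [Field k] [CharP k 2] (m : ℕ) (hm : 1 ≤ m)
    (V : Type) [AddCommGroup V] [Module k V] [DistribMulAction K4 V] [SMulCommClass K4 k V]
    (B : Module.Basis (Fin (m + 1) ⊕ Fin m) k V) (hV : IsVpos k m V B) :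
    {v : V | ∀ g : K4, g • v = v} =
      ↑(Submodule.span k (Set.range fun j : Fin m => B (Sum.inr j))) ∧
    Submodule.span k
      ((fun v : V => relTr H1 v) '' {v : V | ∀ h ∈ H1, h • v = v} ∪
        (fun v : V => relTr H2 v) '' {v : V | ∀ h ∈ H2, h • v = v} ∪
        (fun v : V => relTr H3 v) '' {v : V | ∀ h ∈ H3, h • v = v}) =
      Submodule.span k {B (Sum.inr ⟨0, hm⟩), B (Sum.inr ⟨m - 1, by omega⟩),
        ∑ j : Fin m, B (Sum.inr j)} := by
  classical
  haveI : NeZero m := ⟨by omega⟩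
  obtain ⟨hb1, hb2, hb3, hb4, hb5, hb6⟩ := hV
  have hV' : IsVpos k m V B := ⟨hb1, hb2, hb3, hb4, hb5, hb6⟩
  -- char 2 facts
  have h2k : (2 : k) = 0 := by
    have := CharP.cast_eq_zero k 2
    exact_mod_cast this
  have char2V : ∀ x : V, x + x = 0 := fun x => by
    rw [← two_smul k x, h2k, zero_smul]
  -- linear independence of the b's
  have bLI : LinearIndependent k (fun i : Fin m => B (Sum.inr i)) :=
    B.linearIndependent.comp Sum.inr Sum.inr_injective
  have sum_zero_iff : ∀ c : Fin m → k,
      (∑ i, c i • B (Sum.inr i)) = 0 ↔ ∀ i, c i = 0 := by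
    intro c
    constructor
    · intro h i
      exact Fintype.linearIndependent_iff.mp bLI c h i
    · intro h
      exact Finset.sum_eq_zero fun i _ => by rw [h i, zero_smul]
  -- fixed point characterizations
  have keyX : ∀ v : V, sg • v = v ↔ ∀ i : Fin m, B.repr v (Sum.inl i.succ) = 0 := by
    intro v
    rw [hXv k m V B hV' v, add_eq_left]
    exact sum_zero_iff _
  have keyY : ∀ v : V, tg • v = v ↔ ∀ i : Fin m, B.repr v (Sum.inl i.castSucc) = 0 := by
    intro v
    rw [hYv k m V B hV' v, add_eq_left]
    exact sum_zero_iff _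
  -- subgroup membership / covering facts
  have ntgH1 : tg ∉ H1 := by
    intro h
    rcases (mem_zpowers_iff' sg tg).mp h with h | h <;> exact absurd h (by decide)
  have nsgH2 : sg ∉ H2 := by
    intro h
    rcases (mem_zpowers_iff' tg sg).mp h with h | h <;> exact absurd h (by decide)
  have nsgH3 : sg ∉ H3 := by
    intro h
    rcases (mem_zpowers_iff' (sg * tg) sg).mp h with h | h <;> exact absurd h (by decide)
  have covH1 : ∀ x : K4, x ∈ H1 ∨ tg⁻¹ * x ∈ H1 := by
    intro x
    rcases K4_cases x with rfl | rfl | rfl | rfl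
    · exact Or.inl (one_mem _)
    · exact Or.inl (Subgroup.mem_zpowers _)
    · rw [(by decide : tg⁻¹ * tg = (1 : K4))]; exact Or.inr (one_mem _)
    · rw [(by decide : tg⁻¹ * (sg * tg) = sg)]; exact Or.inr (Subgroup.mem_zpowers _)
  have covH2 : ∀ x : K4, x ∈ H2 ∨ sg⁻¹ * x ∈ H2 := by
    intro x
    rcases K4_cases x with rfl | rfl | rfl | rfl
    · exact Or.inl (one_mem _)
    · rw [(by decide : sg⁻¹ * sg = (1 : K4))]; exact Or.inr (one_mem _)
    · exact Or.inl (Subgroup.mem_zpowers _)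
    · rw [(by decide : sg⁻¹ * (sg * tg) = tg)]; exact Or.inr (Subgroup.mem_zpowers _)
  have covH3 : ∀ x : K4, x ∈ H3 ∨ sg⁻¹ * x ∈ H3 := by
    intro x
    rcases K4_cases x with rfl | rfl | rfl | rfl
    · exact Or.inl (one_mem _)
    · rw [(by decide : sg⁻¹ * sg = (1 : K4))]; exact Or.inr (one_mem _)
    · rw [(by decide : sg⁻¹ * tg = sg * tg)]; exact Or.inr (Subgroup.mem_zpowers _)
    · exact Or.inl (Subgroup.mem_zpowers _)
  -- index identities
  have e00 : ((0 : Fin m).castSucc : Fin (m + 1)) = 0 := by ext; simp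
  have e0m : ((⟨0, hm⟩ : Fin m) : Fin m) = 0 := by ext; simp
  have elast : ((⟨m - 1, by omega⟩ : Fin m).succ : Fin (m + 1)) = Fin.last m := by
    ext; simp; omega
  constructor
  · -- Part 1
    ext v
    simp only [Set.mem_setOf_eq, SetLike.mem_coe]
    constructor
    · intro hfix
      have hX := (keyX v).mp (hfix sg)
      have hY := (keyY v).mp (hfix tg)
      have hall : ∀ j : Fin (m + 1), B.repr v (Sum.inl j) = 0 := by
        intro j
        rcases Fin.eq_castSucc_or_eq_last j with ⟨i, rfl⟩ | rfl
        · exact hY i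
        · rw [← elast]; exact hX _
      rw [← B.sum_repr v, Fintype.sum_sum_type]
      refine Submodule.add_mem _ ?_ ?_
      · rw [Finset.sum_eq_zero (fun j _ => by rw [hall j, zero_smul])]
        exact Submodule.zero_mem _
      · exact Submodule.sum_mem _ fun i _ =>
          Submodule.smul_mem _ _ (Submodule.subset_span ⟨i, rfl⟩)
    · intro hv g
      induction hv using Submodule.span_induction with
      | mem x hx =>
        obtain ⟨j, rfl⟩ := hx
        rcases K4_cases g with rfl | rfl | rfl | rfl
        · exact one_smul _ _
        · exact hb5 j
        · exact hb6 j
        · rw [mul_smul, hb6 j, hb5 j]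
      | zero => exact smul_zero _
      | add x y _ _ hx hy => rw [smul_add, hx, hy]
      | smul c x _ hx => rw [smul_comm, hx]
  · -- Part 2
    apply le_antisymm
    · rw [Submodule.span_le]
      rintro w ((⟨v, hvmem, rfl⟩ | ⟨v, hvmem, rfl⟩) | ⟨v, hvmem, rfl⟩)
      · -- H1 case
        simp only [Set.mem_setOf_eq] at hvmem
        beta_reduce
        have hfix : sg • v = v := hvmem sg (Subgroup.mem_zpowers _)
        have hc := (keyX v).mp hfix
        have htr : relTr H1 v = ∑ i : Fin m, B.repr v (Sum.inl i.castSucc) • B (Sum.inr i) := by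
          rw [relTr_eq H1 tg ntgH1 covH1 v hvmem, hYv k m V B hV' v, ← add_assoc,
            char2V, zero_add]
        have hsingle : (∑ i : Fin m, B.repr v (Sum.inl i.castSucc) • B (Sum.inr i)) =
            B.repr v (Sum.inl ((0 : Fin m).castSucc)) • B (Sum.inr 0) := by
          refine Finset.sum_eq_single 0 (fun i _ hi => ?_) (fun h => absurd (Finset.mem_univ _) h)
          have hi' : (i : ℕ) ≠ 0 := fun h => hi (by ext; simp [h])
          have : i.castSucc = (⟨(i : ℕ) - 1, by omega⟩ : Fin m).succ := by
            ext; simp; omega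
          rw [this, hc, zero_smul]
        rw [htr, hsingle]
        refine Submodule.smul_mem _ _ (Submodule.subset_span ?_)
        rw [← e0m]
        exact Set.mem_insert _ _
      · -- H2 case
        simp only [Set.mem_setOf_eq] at hvmem
        beta_reduce
        have hfix : tg • v = v := hvmem tg (Subgroup.mem_zpowers _)
        have hc := (keyY v).mp hfix
        have htr : relTr H2 v = ∑ i : Fin m, B.repr v (Sum.inl i.succ) • B (Sum.inr i) := by
          rw [relTr_eq H2 sg nsgH2 covH2 v hvmem, hXv k m V B hV' v, ← add_assoc,
            char2V, zero_add]
        have hsingle : (∑ i : Fin m, B.repr v (Sum.inl i.succ) • B (Sum.inr i)) =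
            B.repr v (Sum.inl (⟨m - 1, by omega⟩ : Fin m).succ) • B (Sum.inr ⟨m - 1, by omega⟩) := by
          refine Finset.sum_eq_single _ (fun i _ hi => ?_) (fun h => absurd (Finset.mem_univ _) h)
          have hi' : (i : ℕ) ≠ m - 1 := fun h => hi (by ext; simp [h])
          have hlt : (i : ℕ) + 1 < m := by have := i.isLt; omega
          have : i.succ = (⟨(i : ℕ) + 1, hlt⟩ : Fin m).castSucc := by
            ext; simp
          rw [this, hc, zero_smul]
        rw [htr, hsingle]
        refine Submodule.smul_mem _ _ (Submodule.subset_span ?_)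
        exact Set.mem_insert_of_mem _ (Set.mem_insert _ _)
      · -- H3 case
        simp only [Set.mem_setOf_eq] at hvmem
        beta_reduce
        have hfix : (sg * tg) • v = v := hvmem _ (Subgroup.mem_zpowers _)
        have hts : tg • v = sg • v := by
          have h2 : sg • ((sg * tg) • v) = sg • v := by rw [hfix]
          rwa [← mul_smul, ← mul_assoc, K4_sq sg, one_mul] at h2
        rw [hYv k m V B hV' v, hXv k m V B hV' v] at hts
        have hsums := add_left_cancel hts
        have hcoef : ∀ i : Fin m,
            B.repr v (Sum.inl i.castSucc) = B.repr v (Sum.inl i.succ) := by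
          intro i
          have hz : (∑ i : Fin m,
              (B.repr v (Sum.inl i.castSucc) - B.repr v (Sum.inl i.succ)) • B (Sum.inr i)) = 0 := by
            simp only [sub_smul]
            rw [Finset.sum_sub_distrib, hsums, sub_self]
          exact sub_eq_zero.mp ((sum_zero_iff _).mp hz i)
        have hconst : ∀ n : ℕ, ∀ hn : n < m + 1,
            B.repr v (Sum.inl ⟨n, hn⟩) = B.repr v (Sum.inl 0) := by
          intro n
          induction n with
          | zero =>
            intro hn
            have h0 : (⟨0, hn⟩ : Fin (m + 1)) = 0 := by ext; simp
            rw [h0]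
          | succ n ih =>
            intro hn
            have hnm : n < m := by omega
            have e1 : (⟨n + 1, hn⟩ : Fin (m + 1)) = (⟨n, hnm⟩ : Fin m).succ := by ext; simp
            have e2 : ((⟨n, hnm⟩ : Fin m).castSucc : Fin (m + 1)) = ⟨n, by omega⟩ := by ext; simp
            rw [e1, ← hcoef, e2, ih]
        have htr : relTr H3 v = B.repr v (Sum.inl 0) • ∑ i : Fin m, B (Sum.inr i) := by
          rw [relTr_eq H3 sg nsgH3 covH3 v hvmem, hXv k m V B hV' v, ← add_assoc,
            char2V, zero_add, Finset.smul_sum]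
          refine Finset.sum_congr rfl fun i _ => ?_
          rw [show (Sum.inl i.succ : Fin (m+1) ⊕ Fin m) = Sum.inl ⟨(i : ℕ) + 1, by omega⟩ from by
            congr 1, hconst]
        rw [htr]
        refine Submodule.smul_mem _ _ (Submodule.subset_span ?_)
        exact Set.mem_insert_of_mem _ (Set.mem_insert_of_mem _ rfl)
    · rw [Submodule.span_le]
      rintro w hw
      simp only [Set.mem_insert_iff, Set.mem_singleton_iff] at hw
      rcases hw with rfl | rfl | rfl
      · -- b₁ = relTr H1 a₀
        refine Submodule.subset_span (Set.mem_union_left _ (Set.mem_union_left _ ?_))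
        refine ⟨B (Sum.inl 0), ?_, ?_⟩
        · intro h hh
          rcases (mem_zpowers_iff' sg h).mp hh with rfl | rfl
          exacts [one_smul _ _, hb1]
        · have hfixv : ∀ h ∈ H1, h • B (Sum.inl 0) = B (Sum.inl 0) := by
            intro h hh
            rcases (mem_zpowers_iff' sg h).mp hh with rfl | rfl
            exacts [one_smul _ _, hb1]
          beta_reduce
          rw [relTr_eq H1 tg ntgH1 covH1 _ hfixv]
          rw [show (Sum.inl 0 : Fin (m+1) ⊕ Fin m) = Sum.inl ((0 : Fin m).castSucc) from by
            rw [e00]]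
          rw [hb3 0, ← add_assoc, char2V, zero_add, e0m]
      · -- bₘ = relTr H2 a_last
        refine Submodule.subset_span (Set.mem_union_left _ (Set.mem_union_right _ ?_))
        have hfixv : ∀ h ∈ H2, h • B (Sum.inl (Fin.last m)) = B (Sum.inl (Fin.last m)) := by
          intro h hh
          rcases (mem_zpowers_iff' tg h).mp hh with rfl | rfl
          exacts [one_smul _ _, hb4]
        refine ⟨B (Sum.inl (Fin.last m)), hfixv, ?_⟩
        beta_reduce
        rw [relTr_eq H2 sg nsgH2 covH2 _ hfixv]
        rw [show (Sum.inl (Fin.last m) : Fin (m+1) ⊕ Fin m) =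
          Sum.inl (⟨m - 1, by omega⟩ : Fin m).succ from by rw [elast]]
        rw [hb2, ← add_assoc, char2V, zero_add]
      · -- Σ b = relTr H3 (Σ a)
        refine Submodule.subset_span (Set.mem_union_right _ ?_)
        have hsgw : (sg • ∑ j : Fin (m + 1), B (Sum.inl j)) =
            (∑ j : Fin (m + 1), B (Sum.inl j)) + ∑ i : Fin m, B (Sum.inr i) := by
          rw [Finset.smul_sum, Fin.sum_univ_succ,
            Fin.sum_univ_succ (f := fun j : Fin (m+1) => B (Sum.inl j)), hb1]
          rw [Finset.sum_congr rfl (fun i _ => hb2 i)]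
          rw [Finset.sum_add_distrib]
          abel
        have htgw : (tg • ∑ j : Fin (m + 1), B (Sum.inl j)) =
            (∑ j : Fin (m + 1), B (Sum.inl j)) + ∑ i : Fin m, B (Sum.inr i) := by
          rw [Finset.smul_sum, Fin.sum_univ_castSucc,
            Fin.sum_univ_castSucc (f := fun j : Fin (m+1) => B (Sum.inl j)), hb4]
          rw [Finset.sum_congr rfl (fun i _ => hb3 i)]
          rw [Finset.sum_add_distrib]
          abel
        have hsgb : (sg • ∑ i : Fin m, B (Sum.inr i)) = ∑ i : Fin m, B (Sum.inr i) := by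
          rw [Finset.smul_sum]
          exact Finset.sum_congr rfl fun i _ => hb5 i
        have hfixv : ∀ h ∈ H3, h • (∑ j : Fin (m + 1), B (Sum.inl j)) =
            ∑ j : Fin (m + 1), B (Sum.inl j) := by
          intro h hh
          rcases (mem_zpowers_iff' (sg * tg) h).mp hh with rfl | rfl
          · exact one_smul _ _
          · rw [mul_smul, htgw, smul_add, hsgw, hsgb, add_assoc, char2V, add_zero]
        refine ⟨∑ j : Fin (m + 1), B (Sum.inl j), hfixv, ?_⟩
        beta_reduce
        rw [relTr_eq H3 sg nsgH3 covH3 _ hfixv, hsgw, ← add_assoc, char2V, zero_add]
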